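/- arXiv:2304.05790 — 2 statements merged into one kernel-verified Lean document; each statement's English description precedes it below -/
import Mathlib

section
/- Corollary 3.12 (parallelized maximum functions): There exists a constant K ∈ ℕ which satisfies for all d ∈ ℕ, every d-dimensional hypercube Q ⊆ ℝ^d, and all ε ∈ [0,∞), p ∈ [1,∞], f ∈ M(Q) that Cost_p(f, 1, ε) ≤ K·d^K. -/
open scoped BigOperators ENNReal

noncomputable section

/-- A ReLU deep neural network with `L + 1` affine layers (so depth at least one),
layer dimensions `ℓ 0, ℓ 1, …, ℓ (L + 1)`, weight matrices `W k` and bias vectors `b k`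
(values of `ℓ`, `W`, `b` beyond layer index `L` are irrelevant for the realization
and for the number of parameters). -/
structure DNN where
  L : ℕ
  ℓ : ℕ → ℕ
  W : (k : ℕ) → Matrix (Fin (ℓ (k + 1))) (Fin (ℓ k)) ℝ
  b : (k : ℕ) → Fin (ℓ (k + 1)) → ℝ

namespace DNN

/-- The number of parameters `P(Φ) = ∑_{k=1}^{L} ℓ_k (ℓ_{k-1} + 1)` of a DNN. -/
def params (Φ : DNN) : ℕ :=
  ∑ k ∈ Finset.range (Φ.L + 1), Φ.ℓ (k + 1) * (Φ.ℓ k + 1)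

/-- The `k`-th affine layer function `x ↦ W_k x + b_k`. -/
def affine (Φ : DNN) (k : ℕ) (x : Fin (Φ.ℓ k) → ℝ) : Fin (Φ.ℓ (k + 1)) → ℝ :=
  fun i => (∑ j, Φ.W k i j * x j) + Φ.b k i

/-- The value after `k` affine layers, each followed by the ReLU activation. -/
def hidden (Φ : DNN) : (k : ℕ) → (Fin (Φ.ℓ 0) → ℝ) → (Fin (Φ.ℓ k) → ℝ)
  | 0 => id
  | k + 1 => fun x i => max (affine Φ k (hidden Φ k x) i) 0

/-- The realization `R(Φ)`: all affine layers with ReLU in between (no activation after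
the last affine layer). -/
def realize (Φ : DNN) (x : Fin (Φ.ℓ 0) → ℝ) : Fin (Φ.ℓ (Φ.L + 1)) → ℝ :=
  affine Φ Φ.L (hidden Φ Φ.L x)

/-- `Φ.Realizes f` means that the realization of `Φ` is the function `f : ℝ^m → ℝ^n`
(in particular the input and output dimensions of `Φ` are `m` and `n`). -/
def Realizes (Φ : DNN) {m n : ℕ} (f : (Fin m → ℝ) → (Fin n → ℝ)) : Prop :=
  ∃ (hm : Φ.ℓ 0 = m) (hn : Φ.ℓ (Φ.L + 1) = n),
    ∀ (x : Fin m → ℝ) (i : Fin n),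
      f x i = realize Φ (fun j => x (Fin.cast hm j)) (Fin.cast hn.symm i)

end DNN

/-- The `ℓ^p`-norm on `ℝ^k` for `p ∈ [1,∞]`. -/
def lpNorm (p : ℝ≥0∞) {k : ℕ} (x : Fin k → ℝ) : ℝ :=
  if p = ∞ then ⨆ i, |x i| else (∑ i, |x i| ^ p.toReal) ^ (1 / p.toReal)

/-- The hypercube `[a,b]^d ⊆ ℝ^d`. -/
def cube (d : ℕ) (a b : ℝ) : Set (Fin d → ℝ) :=
  Set.Icc (fun _ => a) (fun _ => b)

/-- `Cost p D f L ε`: the minimal number of parameters of a DNN whose realization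
approximates `f` on `D` up to `ε` in the `ℓ^p`-norm and is `L`-Lipschitz on `D`
with respect to the `ℓ^p`-norm; `∞` if no such DNN exists. -/
def Cost (p : ℝ≥0∞) {m n : ℕ} (D : Set (Fin m → ℝ))
    (f : (Fin m → ℝ) → (Fin n → ℝ)) (L ε : ℝ) : ℝ≥0∞ :=
  sInf { N : ℝ≥0∞ | ∃ Φ : DNN, ∃ g : (Fin m → ℝ) → (Fin n → ℝ),
    Φ.Realizes g ∧ N = (Φ.params : ℝ≥0∞) ∧
    (∀ x ∈ D, lpNorm p (g x - f x) ≤ ε) ∧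
    (∀ x ∈ D, ∀ y ∈ D, lpNorm p (g x - g y) ≤ L * lpNorm p (x - y)) }

/-- Given block sizes `d : Fin n → ℕ`, the index in `Fin (∑ j, d j)` of the `l`-th
coordinate of the `i`-th block (blocks are arranged consecutively). -/
def blockIdx {n : ℕ} (d : Fin n → ℕ) (i : Fin n) (l : Fin (d i)) : Fin (∑ j, d j) :=
  ⟨(∑ j ∈ Finset.univ.filter (fun j => j < i), d j) + l.1, by
    have h1 : l.1 < d i := l.2
    have h2 : (∑ j ∈ Finset.univ.filter (fun j => j < i), d j) + d i ≤ ∑ j, d j := by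
      have hsplit := Finset.sum_filter_add_sum_filter_not Finset.univ (fun j => j < i) d
      have h3 : d i ≤ ∑ j ∈ Finset.univ.filter (fun j => ¬ j < i), d j :=
        Finset.single_le_sum (fun _ _ => Nat.zero_le _) (by simp)
      omega
    omega⟩

/-- The class `𝒫_{k,p}([a,b]^d, L)`: parallelizations `f = f_1 □ ⋯ □ f_m` of real-valued
functions `f_i` of at most `k` variables that are `L`-Lipschitz w.r.t. the `ℓ^p`-norm. -/
def MemPLip (k : ℕ) (p : ℝ≥0∞) (a b L : ℝ) {d m : ℕ}
    (f : (Fin d → ℝ) → (Fin m → ℝ)) : Prop :=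
  ∃ (dims : Fin m → ℕ) (hd : ∑ i, dims i = d) (g : ∀ i, (Fin (dims i) → ℝ) → ℝ),
    (∀ i, 0 < dims i) ∧ (∀ i, dims i ≤ k) ∧
    (∀ i, ∀ x ∈ cube (dims i) a b, ∀ y ∈ cube (dims i) a b,
      |g i x - g i y| ≤ L * lpNorm p (x - y)) ∧
    (∀ x ∈ cube d a b, ∀ i : Fin m,
      f x i = g i (fun l => x (Fin.cast hd (blockIdx dims i l))))

/-- The class `M([a,b]^d)`: parallelizations of maximum functions `m_{d_1} □ ⋯ □ m_{d_m}`. -/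
def MemMaxClass (a b : ℝ) {d m : ℕ} (f : (Fin d → ℝ) → (Fin m → ℝ)) : Prop :=
  ∃ (dims : Fin m → ℕ) (hd : ∑ i, dims i = d),
    (∀ i, 0 < dims i) ∧
    (∀ x ∈ cube d a b, ∀ i : Fin m,
      f x i = ⨆ l : Fin (dims i), x (Fin.cast hd (blockIdx dims i l)))

/-- The class `P([a,b]^d)`: parallelizations of product functions `p_{d_1} □ ⋯ □ p_{d_m}`. -/
def MemProdClass (a b : ℝ) {d m : ℕ} (f : (Fin d → ℝ) → (Fin m → ℝ)) : Prop :=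
  ∃ (dims : Fin m → ℕ) (hd : ∑ i, dims i = d),
    (∀ i, 0 < dims i) ∧
    (∀ x ∈ cube d a b, ∀ i : Fin m,
      f x i = ∏ l : Fin (dims i), x (Fin.cast hd (blockIdx dims i l)))

/-- `f` coincides on `[a,b]^d` with the extended maximum function
`𝔪_d(x) = (max{x_1}, max{x_1,x_2}, …, max{x_1,…,x_d})`. -/
def IsExtMaxOn (a b : ℝ) {d m : ℕ} (f : (Fin d → ℝ) → (Fin m → ℝ)) : Prop :=
  ∃ h : d = m, ∀ x ∈ cube d a b, ∀ i : Fin m,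
    f x i = (Finset.Iic (Fin.cast h.symm i)).sup' Finset.nonempty_Iic x

/-- `f` coincides on `[a,b]^d` with the extended product function
`𝔭_d(x) = (x_1, x_1 x_2, …, x_1 ⋯ x_d)`. -/
def IsExtProdOn (a b : ℝ) {d m : ℕ} (f : (Fin d → ℝ) → (Fin m → ℝ)) : Prop :=
  ∃ h : d = m, ∀ x ∈ cube d a b, ∀ i : Fin m,
    f x i = ∏ j ∈ Finset.Iic (Fin.cast h.symm i), x j

/-- Iterated composition: `compSeq dims f k = f_{k-1} ∘ ⋯ ∘ f_1 ∘ f_0`. -/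
def compSeq (dims : ℕ → ℕ) (f : ∀ i : ℕ, (Fin (dims i) → ℝ) → (Fin (dims (i + 1)) → ℝ)) :
    (k : ℕ) → (Fin (dims 0) → ℝ) → (Fin (dims k) → ℝ)
  | 0 => id
  | k + 1 => fun x => f k (compSeq dims f k x)


namespace Cor312
open Finset

/-- cumulative offsets -/
def O (m : ℕ) (dims : Fin m → ℕ) (i : ℕ) : ℕ :=
  ∑ t ∈ Finset.range i, if h : t < m then dims ⟨t, h⟩ else 0

/-- block starts -/
def S (m : ℕ) (dims : Fin m → ℕ) (j : ℕ) : Prop :=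
  ∃ i, i < m ∧ O m dims i = j

variable {m : ℕ} {dims : Fin m → ℕ}

lemma O_zero : O m dims 0 = 0 := by simp [O]

lemma O_succ (i : ℕ) (hi : i < m) :
    O m dims (i + 1) = O m dims i + dims ⟨i, hi⟩ := by
  simp [O, Finset.sum_range_succ, hi]

lemma O_mono : Monotone (O m dims) := by
  intro i j hij
  exact Finset.sum_le_sum_of_subset (Finset.range_subset_range.2 hij)

lemma O_strict (hpos : ∀ i : Fin m, 0 < dims i) {i : ℕ} (hi : i < m) :
    O m dims i < O m dims (i + 1) := by
  rw [O_succ i hi]; exact Nat.lt_add_of_pos_right (hpos _)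

lemma O_top {d : ℕ} (hsum : ∑ i, dims i = d) : O m dims m = d := by
  rw [← hsum, O,
    ← Fin.sum_univ_eq_sum_range (fun t => if h : t < m then dims ⟨t, h⟩ else 0) m]
  exact Finset.sum_congr rfl (fun i _ => by simp [i.2])

lemma cover {d : ℕ} (hsum : ∑ i, dims i = d)
    {j : ℕ} (hj : j < d) : ∃ i, i < m ∧ O m dims i ≤ j ∧ j < O m dims (i + 1) := by
  classical
  set P : ℕ → Prop := fun i => O m dims i ≤ j with hP
  have hP0 : P 0 := by simp [hP, O_zero]
  set i := Nat.findGreatest P m with hi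
  have hPi : P i := Nat.findGreatest_spec (Nat.zero_le m) hP0
  have him : i ≤ m := Nat.findGreatest_le m
  have hine : i ≠ m := by
    intro h
    have := hPi
    rw [h, hP] at this
    rw [O_top hsum] at this
    omega
  have hilt : i < m := lt_of_le_of_ne him hine
  refine ⟨i, hilt, hPi, ?_⟩
  by_contra hcon
  push_neg at hcon
  have := Nat.findGreatest_is_greatest (Nat.lt_succ_self i) (by omega : i + 1 ≤ m)
  exact this hcon

lemma block_unique {i i' j : ℕ} (hi : i < m) (hi' : i' < m)
    (h1 : O m dims i ≤ j) (h2 : j < O m dims (i + 1))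
    (h3 : O m dims i' ≤ j) (h4 : j < O m dims (i' + 1)) : i = i' := by
  rcases lt_trichotomy i i' with h | h | h
  · have : O m dims (i + 1) ≤ O m dims i' := O_mono (by omega)
    omega
  · exact h
  · have : O m dims (i' + 1) ≤ O m dims i := O_mono (by omega)
    omega


open Classical in
/-- window of indices contributing to the value at `j` after `t` propagation steps -/
def Win (d m : ℕ) (dims : Fin m → ℕ) (t j : ℕ) : Finset ℕ :=
  (Finset.range d).filter
    (fun l => j + 1 - t ≤ l ∧ l ≤ j ∧ ∃ i, i < m ∧ O m dims i ≤ l ∧ j < O m dims (i + 1))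

lemma mem_Win {d t j l : ℕ} :
    l ∈ Win d m dims t j ↔
      l < d ∧ j + 1 - t ≤ l ∧ l ≤ j ∧
        ∃ i, i < m ∧ O m dims i ≤ l ∧ j < O m dims (i + 1) := by
  simp [Win, Finset.mem_filter, Finset.mem_range, and_assoc]

lemma self_mem_Win {d t j : ℕ} (hsum : ∑ i, dims i = d) (hj : j < d) (ht : 1 ≤ t) :
    j ∈ Win d m dims t j := by
  obtain ⟨i, hi, h1, h2⟩ := cover hsum hj
  exact mem_Win.2 ⟨hj, by omega, le_rfl, i, hi, h1, h2⟩

lemma Win_nonempty {d t j : ℕ} (hsum : ∑ i, dims i = d) (hj : j < d) (ht : 1 ≤ t) :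
    (Win d m dims t j).Nonempty :=
  ⟨j, self_mem_Win hsum hj ht⟩

lemma Win_one {d j : ℕ} (hsum : ∑ i, dims i = d) (hj : j < d) :
    Win d m dims 1 j = {j} := by
  ext l
  simp only [Finset.mem_singleton, mem_Win]
  constructor
  · rintro ⟨-, h1, h2, -⟩; omega
  · rintro rfl
    exact mem_Win.1 (self_mem_Win hsum hj le_rfl)

lemma Win_start {d t j : ℕ} (hpos : ∀ i : Fin m, 0 < dims i)
    (hsum : ∑ i, dims i = d) (hj : j < d) (ht : 1 ≤ t)
    (hS : S m dims j) : Win d m dims t j = {j} := by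
  obtain ⟨i0, hi0, hO0⟩ := hS
  ext l
  simp only [Finset.mem_singleton, mem_Win]
  constructor
  · rintro ⟨hld, h1, h2, i, hi, hOl, hjO⟩
    -- l and j are in block i, and j = O i0 is the start of its own block
    have hij : j < O m dims (i0 + 1) := by
      have := O_strict hpos hi0
      omega
    have hii : i = i0 := block_unique hi hi0 (le_trans hOl h2) hjO (le_of_eq hO0) hij
    rw [← hii] at hO0
    omega
  · rintro rfl
    exact mem_Win.1 (self_mem_Win hsum hj ht)

lemma S_zero (hm : 0 < m) : S m dims 0 := ⟨0, hm, O_zero⟩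

lemma Win_step {d t j : ℕ} (hsum : ∑ i, dims i = d) (hj : j < d) (ht : 1 ≤ t)
    (hm : 0 < m) (hS : ¬ S m dims j) :
    Win d m dims (t + 1) j = Win d m dims t j ∪ Win d m dims t (j - 1) := by
  have hj1 : j ≠ 0 := by rintro rfl; exact hS (S_zero hm)
  ext l
  simp only [Finset.mem_union, mem_Win]
  constructor
  · rintro ⟨hld, h1, h2, i, hi, hOl, hjO⟩
    by_cases hc : j + 1 - t ≤ l
    · exact Or.inl ⟨hld, hc, h2, i, hi, hOl, hjO⟩
    · refine Or.inr ⟨hld, by omega, by omega, i, hi, hOl, by omega⟩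
  · rintro (⟨hld, h1, h2, i, hi, hOl, hjO⟩ | ⟨hld, h1, h2, i, hi, hOl, hjO⟩)
    · exact ⟨hld, by omega, h2, i, hi, hOl, hjO⟩
    · -- l is in the block of j-1; show j is in the same block
      have hne : O m dims (i + 1) ≠ j := by
        intro h
        -- then j would be a block start (i+1 < m since O (i+1) = j < d = O m)
        have him : i + 1 ≠ m := by
          intro h'
          rw [h'] at h
          rw [O_top hsum] at h
          omega
        exact hS ⟨i + 1, by omega, h⟩
      exact ⟨hld, by omega, by omega, i, hi, hOl, by omega⟩


/-- value of `x` extended by zero -/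
def xe (d : ℕ) (x : Fin d → ℝ) (l : ℕ) : ℝ := if h : l < d then x ⟨l, h⟩ else 0

/-- layer widths -/
def lfun (d m : ℕ) : ℕ → ℕ := fun k => if k = 0 then d else if k = d + 1 then m else 2 * d

open Classical in
/-- weights -/
def wfun (d m : ℕ) (dims : Fin m → ℕ) (k i j : ℕ) : ℝ :=
  if k = 0 then (if j = i then 1 else 0)
  else if k < d then
    (if i < d then
      (if j = i then (1:ℝ) else 0) + (if j = d + i then 1 else 0)
        + (if ¬ S m dims i ∧ j = i - 1 then (-1) else 0)
        + (if ¬ S m dims i ∧ j = d + i - 1 then (-1) else 0)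
    else
      (if ¬ S m dims (i - d) ∧ j = i - d - 1 then (1:ℝ) else 0)
        + (if ¬ S m dims (i - d) ∧ j = d + (i - d) - 1 then 1 else 0))
  else
    (if j = O m dims (i + 1) - 1 then (1:ℝ) else 0)
      + (if j = d + (O m dims (i + 1) - 1) then 1 else 0)

/-- biases -/
def bfun (d : ℕ) (a : ℝ) (k i : ℕ) : ℝ :=
  if k = 0 then (if i < d then -a else 0) else if k < d then 0 else a

/-- the network -/
def net (d m : ℕ) (dims : Fin m → ℕ) (a : ℝ) : DNN where
  L := d
  ℓ := lfun d m
  W := fun k => Matrix.of fun i j => wfun d m dims k i.1 j.1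
  b := fun k i => bfun d a k i.1

lemma relu_max (u v : ℝ) : max (u - v) 0 + v = max u v := by
  rcases le_total u v with h | h
  · rw [max_eq_right (by linarith), max_eq_right h]; ring
  · rw [max_eq_left (by linarith), max_eq_left h]; ring

lemma sum_ind {n : ℕ} (v : Fin n → ℝ) (c : ℝ) {j0 : ℕ} (h : j0 < n) :
    (∑ j : Fin n, (if j.1 = j0 then c else 0) * v j) = c * v ⟨j0, h⟩ := by
  rw [Finset.sum_eq_single (⟨j0, h⟩ : Fin n)]
  · simp
  · intro b _ hb
    have : b.1 ≠ j0 := fun e => hb (Fin.ext e)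
    simp [this]
  · simp

lemma sum_ind_zero {n : ℕ} (v : Fin n → ℝ) (c : ℝ) {j0 : ℕ} (h : n ≤ j0) :
    (∑ j : Fin n, (if j.1 = j0 then c else 0) * v j) = 0 := by
  apply Finset.sum_eq_zero
  intro b _
  have : b.1 ≠ j0 := by omega
  simp [this]


lemma sup'_of_eq_singleton {j : ℕ} {s : Finset ℕ} (H : s.Nonempty) (h : s = {j}) (f : ℕ → ℝ) :
    s.sup' H f = f j := by
  subst h; simp

section NetFacts

variable {d m : ℕ} {dims : Fin m → ℕ} {a b : ℝ}

lemma net_W (k : ℕ) (i : Fin ((net d m dims a).ℓ (k+1))) (j : Fin ((net d m dims a).ℓ k)) :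
    (net d m dims a).W k i j = wfun d m dims k i.1 j.1 := rfl

lemma net_b (k : ℕ) (i : Fin ((net d m dims a).ℓ (k+1))) :
    (net d m dims a).b k i = bfun d a k i.1 := rfl

lemma net_l0 : (net d m dims a).ℓ 0 = d := rfl

lemma net_lmid {t : ℕ} (h1 : t ≠ 0) (h2 : t ≤ d) : (net d m dims a).ℓ t = 2 * d := by
  show lfun d m t = 2 * d
  rw [lfun, if_neg h1, if_neg (by omega)]

lemma net_lout (hd : 0 < d) : (net d m dims a).ℓ (d + 1) = m := by
  show lfun d m (d + 1) = m
  rw [lfun, if_neg (by omega), if_pos rfl]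

lemma xe_sub_nonneg {x : Fin d → ℝ} (hx : x ∈ cube d a b) {l : ℕ} (hl : l < d) :
    0 ≤ xe d x l - a := by
  have := hx.1 ⟨l, hl⟩
  simp only [xe, dif_pos hl]
  simpa using this

lemma sup'_nonneg_of_cube {x : Fin d → ℝ} (hx : x ∈ cube d a b) {s : Finset ℕ}
    (H : s.Nonempty) (hs : ∀ l ∈ s, l < d) :
    0 ≤ s.sup' H (fun l => xe d x l - a) := by
  obtain ⟨l, hl⟩ := H
  exact le_trans (xe_sub_nonneg hx (hs l hl)) (Finset.le_sup' (fun l => xe d x l - a) hl)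

lemma Win_subset {t j l : ℕ} (h : l ∈ Win d m dims t j) : l < d := (mem_Win.1 h).1

lemma hidden_spec (hd : 0 < d) (hm : 0 < m) (hpos : ∀ i : Fin m, 0 < dims i)
    (hsum : ∑ i, dims i = d) (x : Fin d → ℝ) (hx : x ∈ cube d a b)
    (xt : Fin ((net d m dims a).ℓ 0) → ℝ) (hxt : ∀ c, xt c = xe d x c.1) :
    ∀ t, ∀ (ht : 1 ≤ t), t ≤ d → ∀ j, ∀ (hj : j < d),
      ∀ (c1 c2 : Fin ((net d m dims a).ℓ t)), c1.1 = j → c2.1 = d + j →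
      (net d m dims a).hidden t xt c1 + (net d m dims a).hidden t xt c2
        = (Win d m dims t j).sup' (Win_nonempty hsum hj ht) (fun l => xe d x l - a) := by
  intro t
  induction t with
  | zero => omega
  | succ n ih =>
    intro ht htd j hj c1 c2 hc1 hc2
    have hldn : (net d m dims a).ℓ (n + 1) = 2 * d := net_lmid (by omega) htd
    by_cases hn : n = 0
    · -- base case: first hidden layer
      subst hn
      simp only [DNN.hidden, DNN.affine, net_W, net_b, hc1, hc2, id_eq]
      have hjl : j < (net d m dims a).ℓ 0 := by rw [net_l0]; exact hj
      simp only [wfun, bfun, if_pos rfl, if_true]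
      rw [sum_ind xt 1 hjl, sum_ind_zero xt 1 (by rw [net_l0]; omega)]
      rw [if_pos hj, if_neg (by omega : ¬ d + j < d)]
      rw [hxt ⟨j, hjl⟩]
      have h0 : 0 ≤ xe d x j - a := xe_sub_nonneg hx hj
      rw [sup'_of_eq_singleton _ (Win_one hsum hj)]
      have : (1 : ℝ) * xe d x ↑(⟨j, hjl⟩ : Fin ((net d m dims a).ℓ 0)) + -a = xe d x j - a := by
        simp [sub_eq_add_neg]
      rw [this, max_eq_left h0]
      simp
    · -- inductive step
      have hn1 : 1 ≤ n := by omega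
      have hnd : n < d := by omega
      have hldn' : (net d m dims a).ℓ n = 2 * d := net_lmid hn (le_of_lt hnd)
      have hjlt : j < (net d m dims a).ℓ n := by rw [hldn']; omega
      have hdjlt : d + j < (net d m dims a).ℓ n := by rw [hldn']; omega
      have hIj := ih hn1 (le_of_lt hnd) j hj ⟨j, hjlt⟩ ⟨d + j, hdjlt⟩ rfl rfl
      have hsupnn : 0 ≤ (Win d m dims n j).sup' (Win_nonempty hsum hj hn1)
          (fun l => xe d x l - a) :=
        sup'_nonneg_of_cube hx _ (fun l hl => Win_subset hl)
      by_cases hS : S m dims j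
      · have hc1v : (net d m dims a).hidden (n + 1) xt c1
            = max ((Win d m dims n j).sup' (Win_nonempty hsum hj hn1)
                (fun l => xe d x l - a)) 0 := by
          simp only [DNN.hidden, DNN.affine, net_W, net_b, hc1]
          simp only [wfun, bfun, if_neg hn, if_pos hnd, if_pos hj, hS, not_true_eq_false,
            false_and, if_false, add_zero]
          simp only [add_mul, Finset.sum_add_distrib]
          rw [sum_ind _ 1 hjlt, sum_ind _ 1 hdjlt]
          congr 1
          linarith
        have hc2v : (net d m dims a).hidden (n + 1) xt c2 = 0 := by
          simp only [DNN.hidden, DNN.affine, net_W, net_b, hc2]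
          simp only [wfun, bfun, if_neg hn, if_pos hnd, if_neg (show ¬ d + j < d by omega),
            show d + j - d = j from by omega, hS, not_true_eq_false, false_and, if_false,
            add_zero, zero_mul, Finset.sum_const_zero, zero_add]
          simp
        rw [hc1v, hc2v, max_eq_left hsupnn, add_zero,
          sup'_of_eq_singleton (Win_nonempty hsum hj hn1) (Win_start hpos hsum hj hn1 hS),
          sup'_of_eq_singleton (Win_nonempty hsum hj ht) (Win_start hpos hsum hj ht hS)]
      · have hj0 : j ≠ 0 := fun h => hS (h ▸ S_zero hm)
        have hj1d : j - 1 < d := by omega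
        have hj1lt : j - 1 < (net d m dims a).ℓ n := by rw [hldn']; omega
        have hdj1lt : d + j - 1 < (net d m dims a).ℓ n := by rw [hldn']; omega
        have hIj' := ih hn1 (le_of_lt hnd) (j - 1) hj1d ⟨j - 1, hj1lt⟩ ⟨d + j - 1, hdj1lt⟩
          rfl (by simp; omega)
        have hsupnn' : 0 ≤ (Win d m dims n (j - 1)).sup' (Win_nonempty hsum hj1d hn1)
            (fun l => xe d x l - a) :=
          sup'_nonneg_of_cube hx _ (fun l hl => Win_subset hl)
        have hc1v : (net d m dims a).hidden (n + 1) xt c1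
            = max ((Win d m dims n j).sup' (Win_nonempty hsum hj hn1) (fun l => xe d x l - a)
                - (Win d m dims n (j - 1)).sup' (Win_nonempty hsum hj1d hn1)
                  (fun l => xe d x l - a)) 0 := by
          simp only [DNN.hidden, DNN.affine, net_W, net_b, hc1]
          simp only [wfun, bfun, if_neg hn, if_pos hnd, if_pos hj, hS, not_false_eq_true,
            true_and]
          simp only [add_mul, Finset.sum_add_distrib]
          rw [sum_ind _ 1 hjlt, sum_ind _ 1 hdjlt, sum_ind _ (-1) hj1lt, sum_ind _ (-1) hdj1lt]
          congr 1
          linarith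
        have hc2v : (net d m dims a).hidden (n + 1) xt c2
            = max ((Win d m dims n (j - 1)).sup' (Win_nonempty hsum hj1d hn1)
                (fun l => xe d x l - a)) 0 := by
          simp only [DNN.hidden, DNN.affine, net_W, net_b, hc2]
          simp only [wfun, bfun, if_neg hn, if_pos hnd, if_neg (show ¬ d + j < d by omega),
            show d + j - d = j from by omega, hS, not_false_eq_true, true_and]
          simp only [add_mul, Finset.sum_add_distrib]
          rw [sum_ind _ 1 hj1lt, sum_ind _ 1 hdj1lt]
          congr 1
          linarith
        rw [hc1v, hc2v, max_eq_left hsupnn', relu_max,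
          Finset.sup'_congr (Win_nonempty hsum hj ht) (Win_step hsum hj hn1 hm hS)
            (fun _ _ => rfl),
          Finset.sup'_union (Win_nonempty hsum hj hn1) (Win_nonempty hsum hj1d hn1)]

lemma net_L : (net d m dims a).L = d := rfl

lemma realize_spec (hd : 0 < d) (hm : 0 < m) (hpos : ∀ i : Fin m, 0 < dims i)
    (hsum : ∑ i, dims i = d) (x : Fin d → ℝ) (hx : x ∈ cube d a b)
    (xt : Fin ((net d m dims a).ℓ 0) → ℝ) (hxt : ∀ c, xt c = xe d x c.1)
    (i : ℕ) (him : i < m) (hE : O m dims (i + 1) - 1 < d)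
    (c : Fin ((net d m dims a).ℓ ((net d m dims a).L + 1))) (hc : c.1 = i) :
    (net d m dims a).realize xt c
      = (Win d m dims d (O m dims (i + 1) - 1)).sup' (Win_nonempty hsum hE hd)
          (fun l => xe d x l - a) + a := by
  have hld : (net d m dims a).ℓ d = 2 * d := net_lmid (by omega) le_rfl
  have hElt : O m dims (i + 1) - 1 < (net d m dims a).ℓ d := by rw [hld]; omega
  have hdElt : d + (O m dims (i + 1) - 1) < (net d m dims a).ℓ d := by rw [hld]; omega
  have hspec := hidden_spec hd hm hpos hsum x hx xt hxt d (by omega) le_rfl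
    (O m dims (i + 1) - 1) hE ⟨_, hElt⟩ ⟨_, hdElt⟩ rfl rfl
  change (∑ j : Fin ((net d m dims a).ℓ d), wfun d m dims d c.1 j.1
      * (net d m dims a).hidden d xt j) + bfun d a d c.1 = _
  rw [hc]
  simp only [wfun, bfun, if_neg (show ¬ d = 0 by omega), if_neg (show ¬ d < d by omega)]
  simp only [add_mul, Finset.sum_add_distrib]
  rw [sum_ind _ 1 hElt, sum_ind _ 1 hdElt]
  linarith

lemma O_succ_fin (hpos : ∀ i : Fin m, 0 < dims i) (i : Fin m) :
    O m dims (i.1 + 1) = O m dims i.1 + dims i := by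
  rw [O_succ i.1 i.2]

lemma Win_last (hpos : ∀ i : Fin m, 0 < dims i) (hsum : ∑ i, dims i = d)
    {i : ℕ} (him : i < m) :
    Win d m dims d (O m dims (i + 1) - 1) = Finset.Ico (O m dims i) (O m dims (i + 1)) := by
  have hOlt : O m dims i < O m dims (i + 1) := O_strict hpos him
  have hOd : O m dims (i + 1) ≤ d := by
    have := O_mono (m := m) (dims := dims) (show i + 1 ≤ m by omega)
    rw [O_top hsum] at this; exact this
  ext l
  simp only [mem_Win, Finset.mem_Ico]
  constructor
  · rintro ⟨hld, h1, h2, i', hi', hOl, hjO⟩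
    have hii : i' = i := block_unique hi' him (le_trans hOl h2) hjO (by omega) (by omega)
    subst hii
    omega
  · rintro ⟨h1, h2⟩
    exact ⟨by omega, by omega, by omega, i, him, h1, by omega⟩

lemma blockIdx_val (i : Fin m) (l : Fin (dims i)) :
    (blockIdx dims i l).1 = O m dims i.1 + l.1 := by
  have : (∑ j ∈ Finset.univ.filter (fun j => j < i), dims j) = O m dims i.1 := by
    rw [O]
    refine Finset.sum_nbij' (fun (j : Fin m) => (j.1 : ℕ))
      (fun t => if h : t < m then ⟨t, h⟩ else i) ?_ ?_ ?_ ?_ ?_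
    · intro a ha
      simp only [Finset.mem_filter, Finset.mem_univ, true_and] at ha
      simp only [Finset.mem_range]
      exact ha
    · intro t ht
      simp only [Finset.mem_range] at ht
      have htm : t < m := lt_trans ht i.2
      simp only [Finset.mem_filter, Finset.mem_univ, true_and, dif_pos htm]
      exact ht
    · intro a ha
      simp only [Finset.mem_filter, Finset.mem_univ, true_and] at ha
      simp [a.2]
    · intro t ht
      simp only [Finset.mem_range] at ht
      simp [lt_trans ht i.2]
    · intro a ha
      simp only [Finset.mem_filter, Finset.mem_univ, true_and] at ha
      simp [a.2]
  exact congrArg (· + l.1) this |>.symm ▸ rfl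

lemma sup'_block (hpos : ∀ i : Fin m, 0 < dims i) (hsum : ∑ i, dims i = d)
    (i : Fin m) (x : Fin d → ℝ)
    (H : (Finset.Ico (O m dims i.1) (O m dims (i.1 + 1))).Nonempty) :
    (Finset.Ico (O m dims i.1) (O m dims (i.1 + 1))).sup' H (fun l => xe d x l - a)
      = (⨆ l : Fin (dims i), x (Fin.cast hsum (blockIdx dims i l))) - a := by
  haveI hne : Nonempty (Fin (dims i)) := ⟨⟨0, hpos i⟩⟩
  have hOd : O m dims (i.1 + 1) ≤ d := by
    have := O_mono (m := m) (dims := dims) (show i.1 + 1 ≤ m by omega)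
    rw [O_top hsum] at this; exact this
  have hsucc : O m dims (i.1 + 1) = O m dims i.1 + dims i := O_succ_fin hpos i
  rw [← Finset.sup'_univ_eq_ciSup]
  apply le_antisymm
  · apply Finset.sup'_le
    intro l hl
    simp only [Finset.mem_Ico] at hl
    have hld : l < d := by omega
    have hl0 : l - O m dims i.1 < dims i := by omega
    have hval : (Fin.cast hsum (blockIdx dims i ⟨l - O m dims i.1, hl0⟩)).1 = l := by
      simp only [Fin.coe_cast, blockIdx_val]
      omega
    have hxl : xe d x l = x (Fin.cast hsum (blockIdx dims i ⟨l - O m dims i.1, hl0⟩)) := by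
      rw [xe, dif_pos hld]
      exact congrArg x (Fin.ext hval.symm)
    rw [hxl]
    exact sub_le_sub_right
      (Finset.le_sup' (fun l => x (Fin.cast hsum (blockIdx dims i l))) (Finset.mem_univ _)) a
  · rw [sub_le_iff_le_add]
    apply Finset.sup'_le
    intro l _
    have hmem : O m dims i.1 + l.1 ∈ Finset.Ico (O m dims i.1) (O m dims (i.1 + 1)) := by
      simp only [Finset.mem_Ico]
      have := l.2
      omega
    have hld : O m dims i.1 + l.1 < d := by
      have := l.2
      omega
    have hxl : x (Fin.cast hsum (blockIdx dims i l)) = xe d x (O m dims i.1 + l.1) := by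
      rw [xe, dif_pos hld]
      refine congrArg x (Fin.ext ?_)
      simp only [Fin.coe_cast, blockIdx_val]
    have h2 := Finset.le_sup' (fun l => xe d x l - a) hmem
    rw [hxl]
    linarith

lemma realize_block (hd : 0 < d) (hm : 0 < m) (hpos : ∀ i : Fin m, 0 < dims i)
    (hsum : ∑ i, dims i = d) (x : Fin d → ℝ) (hx : x ∈ cube d a b)
    (xt : Fin ((net d m dims a).ℓ 0) → ℝ) (hxt : ∀ c, xt c = xe d x c.1)
    (i : Fin m) (c : Fin ((net d m dims a).ℓ ((net d m dims a).L + 1))) (hc : c.1 = i.1) :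
    (net d m dims a).realize xt c
      = ⨆ l : Fin (dims i), x (Fin.cast hsum (blockIdx dims i l)) := by
  have hOd : O m dims (i.1 + 1) ≤ d := by
    have := O_mono (m := m) (dims := dims) (show i.1 + 1 ≤ m by omega)
    rw [O_top hsum] at this; exact this
  have hOlt : O m dims i.1 < O m dims (i.1 + 1) := O_strict hpos i.2
  have hE : O m dims (i.1 + 1) - 1 < d := by omega
  rw [realize_spec hd hm hpos hsum x hx xt hxt i.1 i.2 hE c hc,
    Finset.sup'_congr (Win_nonempty hsum hE hd) (Win_last hpos hsum i.2) (fun _ _ => rfl),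
    sup'_block hpos hsum i x]
  ring

end NetFacts

lemma lpNorm_zero_of {k : ℕ} (hk : 0 < k) (p : ℝ≥0∞) (hp : 1 ≤ p) (v : Fin k → ℝ)
    (hv : ∀ i, v i = 0) : lpNorm p v = 0 := by
  haveI : Nonempty (Fin k) := ⟨⟨0, hk⟩⟩
  by_cases hq : p = ∞
  · simp [lpNorm, hq, hv]
  · have hp0 : p ≠ 0 := by intro h; rw [h] at hp; simp at hp
    have hq0 : 0 < p.toReal := ENNReal.toReal_pos hp0 hq
    simp [lpNorm, hq, hv, Real.zero_rpow hq0.ne',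
      Real.zero_rpow (inv_ne_zero hq0.ne')]

lemma abs_sup'_sub {β : Type*} (s : Finset β) (H : s.Nonempty) (f g : β → ℝ) :
    |s.sup' H f - s.sup' H g| ≤ s.sup' H (fun b => |f b - g b|) := by
  rw [abs_sub_le_iff]
  constructor
  · rw [sub_le_iff_le_add]
    apply Finset.sup'_le
    intro b hb
    have h1 := Finset.le_sup' g hb
    have h2 := Finset.le_sup' (fun b => |f b - g b|) hb
    have h3 : f b - g b ≤ |f b - g b| := le_abs_self _
    linarith
  · rw [sub_le_iff_le_add]
    apply Finset.sup'_le
    intro b hb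
    have h1 := Finset.le_sup' f hb
    have h2 := Finset.le_sup' (fun b => |f b - g b|) hb
    have h3 : g b - f b ≤ |f b - g b| := by rw [abs_sub_comm]; exact le_abs_self _
    linarith

section Lip

variable {d m : ℕ} {dims : Fin m → ℕ}

lemma F_lip (hd : 0 < d) (hm : 0 < m) (hpos : ∀ i : Fin m, 0 < dims i)
    (hsum : ∑ i, dims i = d) (p : ℝ≥0∞) (hp : 1 ≤ p)
    (x y : Fin d → ℝ) (u v : Fin m → ℝ)
    (hu : ∀ i, u i = ⨆ l : Fin (dims i), x (Fin.cast hsum (blockIdx dims i l)))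
    (hv : ∀ i, v i = ⨆ l : Fin (dims i), y (Fin.cast hsum (blockIdx dims i l))) :
    lpNorm p (u - v) ≤ lpNorm p (x - y) := by
  haveI hne : ∀ i : Fin m, Nonempty (Fin (dims i)) := fun i => ⟨⟨0, hpos i⟩⟩
  haveI : Nonempty (Fin m) := ⟨⟨0, hm⟩⟩
  -- choose attaining indices
  have hex : ∀ i : Fin m, ∃ l ∈ (Finset.univ : Finset (Fin (dims i))),
      Finset.univ.sup' Finset.univ_nonempty
        (fun l => |x (Fin.cast hsum (blockIdx dims i l)) - y (Fin.cast hsum (blockIdx dims i l))|)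
      = |x (Fin.cast hsum (blockIdx dims i l)) - y (Fin.cast hsum (blockIdx dims i l))| :=
    fun i => Finset.exists_mem_eq_sup' _ _
  choose li _ hli using hex
  set J : Fin m → Fin d := fun i => Fin.cast hsum (blockIdx dims i (li i)) with hJ
  have hJval : ∀ i, (J i).1 = O m dims i.1 + (li i).1 := by
    intro i
    simp only [hJ, Fin.coe_cast, blockIdx_val]
  have hJlt : ∀ i : Fin m, (J i).1 < O m dims (i.1 + 1) := by
    intro i
    rw [hJval i, O_succ_fin hpos i]
    have := (li i).2
    omega
  have hJge : ∀ i : Fin m, O m dims i.1 ≤ (J i).1 := by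
    intro i; rw [hJval i]; omega
  have hJinj : Function.Injective J := by
    intro i i' h
    have hval : (J i).1 = (J i').1 := by rw [h]
    have : i.1 = i'.1 :=
      block_unique i.2 i'.2 (hJge i) (hJlt i) (hval ▸ hJge i') (hval ▸ hJlt i')
    exact Fin.ext this
  have hbound : ∀ i : Fin m, |(u - v) i| ≤ |(x - y) (J i)| := by
    intro i
    have h1 : |(u - v) i| = |u i - v i| := by simp [Pi.sub_apply]
    rw [h1, hu i, hv i, ← Finset.sup'_univ_eq_ciSup, ← Finset.sup'_univ_eq_ciSup]
    refine le_trans (abs_sup'_sub _ Finset.univ_nonempty _ _) ?_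
    rw [hli i]
    simp [hJ, Pi.sub_apply]
  by_cases hq : p = ∞
  · simp only [lpNorm, if_pos hq]
    refine ciSup_le fun i => ?_
    refine le_trans (hbound i) ?_
    exact le_ciSup (f := fun j => |(x - y) j|) (Set.Finite.bddAbove (Set.finite_range _)) (J i)
  · have hp0 : p ≠ 0 := by intro h; rw [h] at hp; simp at hp
    have hq0 : 0 < p.toReal := ENNReal.toReal_pos hp0 hq
    simp only [lpNorm, if_neg hq]
    apply Real.rpow_le_rpow (Finset.sum_nonneg (fun i _ => by positivity)) ?_ (by positivity)
    calc ∑ i, |(u - v) i| ^ p.toReal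
        ≤ ∑ i, |(x - y) (J i)| ^ p.toReal := by
          refine Finset.sum_le_sum (fun i _ => ?_)
          exact Real.rpow_le_rpow (abs_nonneg _) (hbound i) hq0.le
      _ = ∑ j ∈ Finset.univ.image J, |(x - y) j| ^ p.toReal := by
          rw [Finset.sum_image (fun a _ b _ h => hJinj h)]
      _ ≤ ∑ j, |(x - y) j| ^ p.toReal :=
          Finset.sum_le_sum_of_subset_of_nonneg (Finset.subset_univ _)
            (fun j _ _ => by positivity)

end Lip

lemma params_le {d m : ℕ} {dims : Fin m → ℕ} {a : ℝ} (hd : 0 < d) (hmd : m ≤ d) :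
    (net d m dims a).params ≤ 12 * d ^ 3 := by
  have hb : ∀ k, lfun d m k ≤ 2 * d := by
    intro k
    rw [lfun]
    split_ifs <;> omega
  have h1 : (net d m dims a).params
      = ∑ k ∈ Finset.range (d + 1), lfun d m (k + 1) * (lfun d m k + 1) := rfl
  rw [h1]
  calc ∑ k ∈ Finset.range (d + 1), lfun d m (k + 1) * (lfun d m k + 1)
      ≤ ∑ _k ∈ Finset.range (d + 1), 2 * d * (2 * d + 1) :=
        Finset.sum_le_sum (fun k _ => Nat.mul_le_mul (hb _) (by have := hb k; omega))
    _ = (d + 1) * (2 * d * (2 * d + 1)) := by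
        rw [Finset.sum_const, Finset.card_range, smul_eq_mul]
    _ ≤ 12 * d ^ 3 := by
        have h2 : d ^ 3 = d * d * d := by ring
        nlinarith [hd, Nat.one_le_iff_ne_zero.2 (Nat.pos_iff_ne_zero.1 hd)]

end Cor312

/-- **Corollary 3.12**: parallelized maximum functions on any hypercube `Q = [a,b]^d`
can be approximated with Lipschitz constant `1` at cost `≤ K d^K`, for every `ε ∈ [0,∞)`. -/
theorem parallelized_max_approx :
    ∃ K : ℕ, 0 < K ∧
      ∀ d : ℕ, 0 < d → ∀ (a b : ℝ), a < b → ∀ ε : ℝ, 0 ≤ ε → ∀ p : ℝ≥0∞, 1 ≤ p →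
      ∀ (m : ℕ) (f : (Fin d → ℝ) → (Fin m → ℝ)),
        MemMaxClass a b f →
        Cost p (cube d a b) f 1 ε ≤ ENNReal.ofReal ((K : ℝ) * (d : ℝ) ^ K) := by
  refine ⟨12, by norm_num, ?_⟩
  intro d hd a b hab ε hε p hp m f hf
  obtain ⟨dims, hsum, hpos, hfx⟩ := hf
  have hm : 0 < m := by
    rcases Nat.eq_zero_or_pos m with h | h
    · subst h
      simp at hsum
      omega
    · exact h
  have hmd : m ≤ d := by
    have h1 : ∑ _i : Fin m, 1 ≤ ∑ i, dims i := Finset.sum_le_sum (fun i _ => hpos i)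
    simpa [hsum] using h1
  set Φ := Cor312.net d m dims a with hΦ
  have hl0 : Φ.ℓ 0 = d := rfl
  have hlout : Φ.ℓ (Φ.L + 1) = m := Cor312.net_lout hd
  set g : (Fin d → ℝ) → Fin m → ℝ :=
    fun x i => Φ.realize (fun j => x (Fin.cast hl0 j)) (Fin.cast hlout.symm i) with hg
  have hreal : Φ.Realizes g := ⟨hl0, hlout, fun x i => rfl⟩
  have hxt : ∀ (x : Fin d → ℝ), ∀ c : Fin (Φ.ℓ 0),
      (fun j => x (Fin.cast hl0 j)) c = Cor312.xe d x c.1 := by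
    intro x c
    have hcd : c.1 < d := hl0 ▸ c.2
    simp only [Cor312.xe, dif_pos hcd]
    congr 1
  have hgspec : ∀ x ∈ cube d a b, ∀ i : Fin m,
      g x i = ⨆ l : Fin (dims i), x (Fin.cast hsum (blockIdx dims i l)) := by
    intro x hx i
    exact Cor312.realize_block hd hm hpos hsum x hx _ (hxt x) i _ rfl
  have herr : ∀ x ∈ cube d a b, lpNorm p (g x - f x) ≤ ε := by
    intro x hx
    have h0 : lpNorm p (g x - f x) = 0 :=
      Cor312.lpNorm_zero_of hm p hp _ (fun i => by
        simp only [Pi.sub_apply, hgspec x hx i, hfx x hx i, sub_self])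
    rw [h0]
    exact hε
  have hlip : ∀ x ∈ cube d a b, ∀ y ∈ cube d a b,
      lpNorm p (g x - g y) ≤ 1 * lpNorm p (x - y) := by
    intro x hx y hy
    rw [one_mul]
    exact Cor312.F_lip hd hm hpos hsum p hp x y (g x) (g y) (hgspec x hx) (hgspec y hy)
  have hmem : (Φ.params : ℝ≥0∞) ∈ { N : ℝ≥0∞ | ∃ Φ' : DNN, ∃ g' : (Fin d → ℝ) → (Fin m → ℝ),
      Φ'.Realizes g' ∧ N = (Φ'.params : ℝ≥0∞) ∧
      (∀ x ∈ cube d a b, lpNorm p (g' x - f x) ≤ ε) ∧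
      (∀ x ∈ cube d a b, ∀ y ∈ cube d a b,
        lpNorm p (g' x - g' y) ≤ 1 * lpNorm p (x - y)) } :=
    ⟨Φ, g, hreal, rfl, herr, hlip⟩
  refine le_trans (sInf_le hmem) ?_
  have hple : Φ.params ≤ 12 * d ^ 12 := by
    refine le_trans (Cor312.params_le hd hmd) ?_
    have h3 : d ^ 3 ≤ d ^ 12 := Nat.pow_le_pow_right hd (by norm_num)
    omega
  refine le_trans (Nat.cast_le.2 hple : ((Φ.params : ℕ) : ℝ≥0∞) ≤ _) (le_of_eq ?_)
  rw [← ENNReal.ofReal_natCast]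
  congr 1
  push_cast
  ring

end
end

section
/- Lemma 3.13 (approximation of the extended maximum function): There exists a constant K ∈ ℕ which satisfies for all d ∈ ℕ, every d-dimensional hypercube Q ⊆ ℝ^d, and all ε ∈ [0,∞), p ∈ [1,∞] that Cost_p(𝔪_d|_Q, d^{1/p}, ε) ≤ K·d⁴, with the convention 1/∞ = 0. -/
open scoped BigOperators ENNReal

noncomputable section

namespace ExtMaxAux

/-- standard basis indicator row -/
def e (d m : ℕ) : Fin d → ℝ := fun j => if j.1 = m then 1 else 0

lemma sum_e_mul {d : ℕ} (m : ℕ) (hm : m < d) (h : Fin d → ℝ) :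
    ∑ j, e d m j * h j = h ⟨m, hm⟩ := by
  classical
  have key : ∀ j : Fin d, e d m j * h j = if j = ⟨m, hm⟩ then h j else 0 := by
    intro j
    by_cases hj : j = (⟨m, hm⟩ : Fin d)
    · subst hj; simp [e]
    · have hj' : j.1 ≠ m := fun h' => hj (Fin.ext h')
      simp [e, hj', hj]
  simp only [key]
  simp

lemma sum_id {d : ℕ} (h : Fin d → ℝ) (i : Fin d) :
    ∑ j, e d i.1 j * h j = h i := by
  simpa using sum_e_mul i.1 i.2 h

lemma sum_sub {d : ℕ} {m m' : ℕ} (hm : m < d) (hm' : m' < d) (h : Fin d → ℝ) :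
    ∑ j, (e d m j - e d m' j) * h j = h ⟨m, hm⟩ - h ⟨m', hm'⟩ := by
  simp [sub_mul, Finset.sum_sub_distrib, sum_e_mul _ hm, sum_e_mul _ hm']

lemma sum_add {d : ℕ} {m m' : ℕ} (hm : m < d) (hm' : m' < d) (h : Fin d → ℝ) :
    ∑ j, (e d m j + e d m' j) * h j = h ⟨m, hm⟩ + h ⟨m', hm'⟩ := by
  simp [add_mul, Finset.sum_add_distrib, sum_e_mul _ hm, sum_e_mul _ hm']

lemma sum_sub_sub {d : ℕ} {m m' m'' : ℕ} (hm : m < d) (hm' : m' < d) (hm'' : m'' < d)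
    (h : Fin d → ℝ) :
    ∑ j, (e d m j - e d m' j - e d m'' j) * h j =
      h ⟨m, hm⟩ - h ⟨m', hm'⟩ - h ⟨m'', hm''⟩ := by
  simp [sub_mul, Finset.sum_sub_distrib, sum_e_mul _ hm, sum_e_mul _ hm', sum_e_mul _ hm'']

/-- The explicit network computing the running maximum on `[a,b]^d`. -/
def maxNet (d : ℕ) (a : ℝ) : DNN where
  L := d
  ℓ := fun _ => d
  W := fun k i j =>
    if k = 0 then
      (if i.1 = 1 then e d 1 j - e d 0 j else e d i.1 j)
    else if k < d - 1 then
      (if i.1 = k then e d (k - 1) j + e d k j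
       else if i.1 = k + 1 then e d (k + 1) j - e d (k - 1) j - e d k j
       else e d i.1 j)
    else if k = d - 1 then
      (if i.1 = d - 1 then e d (d - 2) j + e d (d - 1) j else e d i.1 j)
    else e d i.1 j
  b := fun k i =>
    if k = 0 then (if i.1 = 1 then 0 else -a)
    else if k ≤ d - 1 then 0 else a

def runMax {d : ℕ} (x : Fin d → ℝ) (j : Fin d) : ℝ :=
  (Finset.Iic j).sup' Finset.nonempty_Iic x

lemma x_le_runMax' {d : ℕ} (x : Fin d → ℝ) {i j : Fin d} (hij : i ≤ j) :
    x i ≤ runMax x j :=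
  Finset.le_sup' x (Finset.mem_Iic.mpr hij)

lemma runMax_zero {d : ℕ} (x : Fin d → ℝ) (h0 : 0 < d) :
    runMax x ⟨0, h0⟩ = x ⟨0, h0⟩ := by
  apply le_antisymm
  · apply Finset.sup'_le
    intro i hi
    rw [Finset.mem_Iic, Fin.le_def] at hi
    have : i = ⟨0, h0⟩ := Fin.ext (by simpa using hi)
    rw [this]
  · exact x_le_runMax' x le_rfl

lemma runMax_zero' {d : ℕ} (x : Fin d → ℝ) (j : Fin d) (hj : j.1 = 0) :
    runMax x j = x j := by
  have h0 : 0 < d := hj ▸ j.2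
  have hje : j = ⟨0, h0⟩ := Fin.ext hj
  rw [hje, runMax_zero]

lemma runMax_step {d : ℕ} (x : Fin d → ℝ) (k : ℕ) (hk : 0 < k) (h : k < d) :
    runMax x ⟨k, h⟩ = max (runMax x ⟨k - 1, by omega⟩) (x ⟨k, h⟩) := by
  apply le_antisymm
  · apply Finset.sup'_le
    intro i hi
    rw [Finset.mem_Iic, Fin.le_def] at hi
    by_cases hik : i.1 = k
    · have : i = ⟨k, h⟩ := Fin.ext hik
      rw [this]; exact le_max_right _ _
    · refine le_trans (x_le_runMax' x (show i ≤ ⟨k - 1, by omega⟩ from ?_)) (le_max_left _ _)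
      rw [Fin.le_def]
      simp only [Fin.val_mk] at hi ⊢
      omega
  · apply max_le
    · apply Finset.sup'_le
      intro i hi
      rw [Finset.mem_Iic] at hi
      refine x_le_runMax' x (le_trans hi ?_)
      rw [Fin.le_def]
      simp only [Fin.val_mk]
      omega
    · exact x_le_runMax' x le_rfl

lemma x_le_runMax {d : ℕ} (x : Fin d → ℝ) {i j : Fin d} (hij : i ≤ j) :
    x i ≤ runMax x j :=
  Finset.le_sup' x (Finset.mem_Iic.mpr hij)

lemma a_le_runMax {d : ℕ} {a : ℝ} {x : Fin d → ℝ} (hxa : ∀ i, a ≤ x i) (j : Fin d) :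
    a ≤ runMax x j :=
  le_trans (hxa j) (x_le_runMax x le_rfl)

lemma add_max_sub (m y : ℝ) : m + max (y - m) 0 = max m y := by
  rcases le_total y m with h | h
  · rw [max_eq_right (by linarith), max_eq_left h]; ring
  · rw [max_eq_left (by linarith), max_eq_right h]; ring

end ExtMaxAux

namespace ExtMaxAux



lemma val_mk {n m : ℕ} (h : m < n) : (⟨m, h⟩ : Fin n).1 = m := rfl

lemma maxNet_W {d : ℕ} (a : ℝ) (k : ℕ) (i j : Fin d) :
    (maxNet d a).W k i j =
      (if k = 0 then
        (if i.1 = 1 then e d 1 j - e d 0 j else e d i.1 j)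
      else if k < d - 1 then
        (if i.1 = k then e d (k - 1) j + e d k j
         else if i.1 = k + 1 then e d (k + 1) j - e d (k - 1) j - e d k j
         else e d i.1 j)
      else if k = d - 1 then
        (if i.1 = d - 1 then e d (d - 2) j + e d (d - 1) j else e d i.1 j)
      else e d i.1 j) := rfl

lemma maxNet_b {d : ℕ} (a : ℝ) (k : ℕ) (i : Fin d) :
    (maxNet d a).b k i =
      (if k = 0 then (if i.1 = 1 then 0 else -a)
       else if k ≤ d - 1 then 0 else a) := rfl

lemma hidden_succ {d : ℕ} (a : ℝ) (k : ℕ) (x : Fin d → ℝ) (j : Fin d) :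
    (maxNet d a).hidden (k + 1) x j =
      max ((∑ j' : Fin d, (maxNet d a).W k j j' * (maxNet d a).hidden k x j') + (maxNet d a).b k j) 0 := rfl

lemma hidden_inv {d : ℕ} (a : ℝ) (x : Fin d → ℝ) (hxa : ∀ i, a ≤ x i) :
    ∀ k, ∀ (hk1 : 1 ≤ k) (hk2 : k ≤ d - 1) (hk3 : k - 1 < d), ∀ j : Fin d,
      (maxNet d a).hidden k x j =
        if j.1 < k then runMax x j - a
        else if j.1 = k then max (x j - runMax x ⟨k - 1, hk3⟩) 0
        else x j - a := by
  intro k hk1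
  induction k, hk1 using Nat.le_induction with
  | base =>
    intro hk2 hk3 j
    have hd2 : 2 ≤ d := by omega
    have h1 : (maxNet d a).hidden 1 x j =
        max ((∑ j' : Fin d, (maxNet d a).W 0 j j' * x j') + (maxNet d a).b 0 j) 0 := rfl
    rw [h1]
    by_cases hj : j.1 = 1
    · have hW : ∀ j' : Fin d, (maxNet d a).W 0 j j' = e d 1 j' - e d 0 j' := by
        intro j'; rw [maxNet_W, if_pos rfl, if_pos hj]
      have hb : (maxNet d a).b 0 j = 0 := by rw [maxNet_b, if_pos rfl, if_pos hj]
      simp only [hW, hb]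
      rw [sum_sub (show 1 < d by omega) (show 0 < d by omega)]
      rw [if_neg (by omega), if_pos hj]
      rw [runMax_zero' x ⟨1 - 1, hk3⟩ rfl]
      have hj1 : j = ⟨1, by omega⟩ := Fin.ext hj
      rw [hj1, add_zero]
    · have hW : ∀ j' : Fin d, (maxNet d a).W 0 j j' = e d j.1 j' := by
        intro j'; rw [maxNet_W, if_pos rfl, if_neg hj]
      have hb : (maxNet d a).b 0 j = -a := by rw [maxNet_b, if_pos rfl, if_neg hj]
      simp only [hW, hb, sum_id]
      rw [max_eq_left (by linarith [hxa j])]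
      by_cases hj0 : j.1 = 0
      · rw [if_pos (by omega), runMax_zero' x j hj0]; ring
      · rw [if_neg (by omega), if_neg hj]; ring
  | succ k hk ih =>
    intro hk2 hk3 j
    have hd3 : k + 2 ≤ d := by omega
    have pm : k - 1 < d := by omega
    have pk : k < d := by omega
    have pp : k + 1 < d := by omega
    have cm : ((⟨k - 1, pm⟩ : Fin d)).1 < k := by simp only [val_mk]; omega
    have ckne : ¬ ((⟨k, pk⟩ : Fin d)).1 < k := by simp only [val_mk]; omega
    have ckeq : ((⟨k, pk⟩ : Fin d)).1 = k := rfl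
    have cpne : ¬ ((⟨k + 1, pp⟩ : Fin d)).1 < k := by simp only [val_mk]; omega
    have cpne' : ¬ ((⟨k + 1, pp⟩ : Fin d)).1 = k := by simp only [val_mk]; omega
    have hKm := ih (by omega) (by omega) (⟨k - 1, pm⟩ : Fin d)
    rw [if_pos cm] at hKm
    have hKk := ih (by omega) (by omega) (⟨k, pk⟩ : Fin d)
    rw [if_neg ckne, if_pos ckeq] at hKk
    have hKp := ih (by omega) (by omega) (⟨k + 1, pp⟩ : Fin d)
    rw [if_neg cpne, if_neg cpne'] at hKp
    have hbk : (maxNet d a).b k j = 0 := by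
      rw [maxNet_b, if_neg (by omega), if_pos (by omega)]
    have hmax : runMax x ⟨k - 1, by omega⟩ - a +
        max (x ⟨k, pk⟩ - runMax x ⟨k - 1, by omega⟩) 0 = runMax x ⟨k, pk⟩ - a := by
      rw [runMax_step x k (by omega) pk]
      have h := add_max_sub (runMax x ⟨k - 1, by omega⟩) (x ⟨k, pk⟩)
      linarith [h]
    rw [hidden_succ]
    by_cases hjk : j.1 = k
    · have hW : ∀ j' : Fin d, (maxNet d a).W k j j' = e d (k - 1) j' + e d k j' := by
        intro j'; rw [maxNet_W, if_neg (by omega), if_pos (by omega), if_pos hjk]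
      simp only [hW, hbk]
      erw [sum_add pm pk, hKm, hKk, add_zero, hmax]
      rw [max_eq_left (by linarith [a_le_runMax hxa (⟨k, pk⟩ : Fin d)])]
      rw [if_pos (by omega)]
      have hj1 : j = ⟨k, pk⟩ := Fin.ext hjk
      rw [hj1]
    · by_cases hjk1 : j.1 = k + 1
      · have hW : ∀ j' : Fin d, (maxNet d a).W k j j' =
            e d (k + 1) j' - e d (k - 1) j' - e d k j' := by
          intro j'; rw [maxNet_W, if_neg (by omega), if_pos (by omega), if_neg hjk, if_pos hjk1]
        simp only [hW, hbk]
        erw [sum_sub_sub pp pm pk, hKp, hKm, hKk, add_zero]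
        rw [if_neg (by omega), if_pos hjk1]
        have hj1 : j = ⟨k + 1, pp⟩ := Fin.ext hjk1
        rw [hj1]
        have he : runMax x ⟨k + 1 - 1, hk3⟩ = runMax x ⟨k, pk⟩ := rfl
        rw [he]
        congr 1
        linarith [hmax]
      · have hW : ∀ j' : Fin d, (maxNet d a).W k j j' = e d j.1 j' := by
          intro j'; rw [maxNet_W, if_neg (by omega), if_pos (by omega), if_neg hjk, if_neg hjk1]
        simp only [hW, hbk, sum_id]
        erw [sum_id, ih (by omega) (by omega) j, add_zero]
        by_cases hjlt : j.1 < k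
        · rw [if_pos hjlt, if_pos (by omega)]
          rw [max_eq_left (by linarith [a_le_runMax hxa j])]
        · have hjgt : k + 1 < j.1 := by omega
          rw [if_neg (by omega), if_neg hjk, if_neg (by omega), if_neg hjk1,
            max_eq_left (by linarith [hxa j])]

lemma hidden_final {d : ℕ} (hd : 0 < d) (a : ℝ) (x : Fin d → ℝ) (hxa : ∀ i, a ≤ x i) :
    ∀ j : Fin d, (maxNet d a).hidden d x j = runMax x j - a := by
  intro j
  by_cases hd1 : d = 1
  · subst hd1
    have h1 : (maxNet 1 a).hidden 1 x j =
        max ((∑ j' : Fin 1, (maxNet 1 a).W 0 j j' * x j') + (maxNet 1 a).b 0 j) 0 := rfl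
    rw [h1]
    have hj0 : j.1 = 0 := by omega
    have hW : ∀ j' : Fin 1, (maxNet 1 a).W 0 j j' = e 1 j.1 j' := by
      intro j'; rw [maxNet_W, if_pos rfl, if_neg (by omega)]
    have hb : (maxNet 1 a).b 0 j = -a := by rw [maxNet_b, if_pos rfl, if_neg (by omega)]
    simp only [hW, hb, sum_id]
    rw [max_eq_left (by linarith [hxa j]), runMax_zero' x j hj0]
    ring
  · have hd2 : 2 ≤ d := by omega
    obtain ⟨m, rfl⟩ : ∃ m, d = m + 1 := ⟨d - 1, by omega⟩
    have hm1 : 1 ≤ m := by omega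
    rw [hidden_succ]
    have hbm : (maxNet (m + 1) a).b m j = 0 := by
      rw [maxNet_b, if_neg (by omega), if_pos (by omega)]
    have pm : m - 1 < m + 1 := by omega
    have pk : m < m + 1 := by omega
    have cm : ((⟨m - 1, pm⟩ : Fin (m + 1))).1 < m := by simp only [val_mk]; omega
    have ckne : ¬ ((⟨m, pk⟩ : Fin (m + 1))).1 < m := by simp only [val_mk]; omega
    have ckeq : ((⟨m, pk⟩ : Fin (m + 1))).1 = m := rfl
    have hmain := hidden_inv a x hxa m hm1 (by omega) (by omega)
    have hKm := hmain (⟨m - 1, pm⟩ : Fin (m + 1))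
    rw [if_pos cm] at hKm
    have hKk := hmain (⟨m, pk⟩ : Fin (m + 1))
    rw [if_neg ckne, if_pos ckeq] at hKk
    by_cases hjm : j.1 = m
    · have hW : ∀ j' : Fin (m + 1), (maxNet (m + 1) a).W m j j' =
          e (m + 1) (m - 1) j' + e (m + 1) m j' := by
        intro j'
        rw [maxNet_W, if_neg (by omega), if_neg (by omega), if_pos (by omega),
          if_pos (show j.1 = m + 1 - 1 by omega)]
        have e2 : m + 1 - 2 = m - 1 := by omega
        have e1 : m + 1 - 1 = m := by omega
        rw [e2, e1]
      simp only [hW, hbm]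
      erw [sum_add pm pk, add_zero, hKm, hKk]
      have hmax : runMax x ⟨m - 1, by omega⟩ - a +
          max (x ⟨m, pk⟩ - runMax x ⟨m - 1, by omega⟩) 0 = runMax x ⟨m, pk⟩ - a := by
        rw [runMax_step x m (by omega) pk]
        have h := add_max_sub (runMax x ⟨m - 1, by omega⟩) (x ⟨m, pk⟩)
        linarith [h]
      rw [hmax, max_eq_left (by linarith [a_le_runMax hxa (⟨m, pk⟩ : Fin (m + 1))])]
      have hj1 : j = ⟨m, pk⟩ := Fin.ext hjm
      rw [hj1]
    · have hjlt : j.1 < m := by omega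
      have hW : ∀ j' : Fin (m + 1), (maxNet (m + 1) a).W m j j' = e (m + 1) j.1 j' := by
        intro j'
        rw [maxNet_W, if_neg (by omega), if_neg (by omega), if_pos (by omega),
          if_neg (show ¬ j.1 = m + 1 - 1 by omega)]
      simp only [hW, hbm, sum_id]
      erw [sum_id, hmain j, if_pos hjlt, add_zero]
      rw [max_eq_left (by linarith [a_le_runMax hxa j])]

lemma realize_eq {d : ℕ} (hd : 0 < d) {a : ℝ} (x : Fin d → ℝ) (hxa : ∀ i, a ≤ x i)
    (j : Fin d) : (maxNet d a).realize x j = runMax x j := by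
  have hre : (maxNet d a).realize x j =
      (∑ j' : Fin d, (maxNet d a).W d j j' * (maxNet d a).hidden d x j') + (maxNet d a).b d j := rfl
  have hW : ∀ j' : Fin d, (maxNet d a).W d j j' = e d j.1 j' := by
    intro j'
    rw [maxNet_W, if_neg (by omega), if_neg (by omega), if_neg (by omega)]
  have hb : (maxNet d a).b d j = a := by
    rw [maxNet_b, if_neg (by omega), if_neg (by omega)]
  rw [hre, hb]
  simp only [hW, sum_id]
  erw [sum_id, hidden_final hd a x hxa j]
  ring


end ExtMaxAux

namespace ExtMaxAux

lemma toReal_ge_one {p : ℝ≥0∞} (hp : 1 ≤ p) (hptop : p ≠ ∞) : 1 ≤ p.toReal := by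
  rw [← ENNReal.toReal_one]
  exact (ENNReal.toReal_le_toReal ENNReal.one_ne_top hptop).mpr hp

lemma lpNorm_zero_eq (p : ℝ≥0∞) (hp : 1 ≤ p) {k : ℕ} : lpNorm p (0 : Fin k → ℝ) = 0 := by
  unfold lpNorm
  split_ifs with h
  · apply le_antisymm
    · exact Real.iSup_le (fun i => by simp) le_rfl
    · exact Real.iSup_nonneg fun i => abs_nonneg _
  · have ht : 1 ≤ p.toReal := toReal_ge_one hp h
    have h1 : ∀ i : Fin k, |(0 : Fin k → ℝ) i| ^ p.toReal = 0 := by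
      intro i
      simp only [Pi.zero_apply, abs_zero]
      exact Real.zero_rpow (by linarith)
    rw [Finset.sum_congr rfl fun i _ => h1 i, Finset.sum_const, smul_zero]
    exact Real.zero_rpow (by positivity)

lemma abs_le_lpNorm {k : ℕ} (p : ℝ≥0∞) (hp : 1 ≤ p) (w : Fin k → ℝ) (i : Fin k) :
    |w i| ≤ lpNorm p w := by
  unfold lpNorm
  split_ifs with h
  · exact le_ciSup (f := fun i => |w i|) (Set.Finite.bddAbove (Set.finite_range _)) i
  · have ht : 1 ≤ p.toReal := toReal_ge_one hp h
    have ht0 : (0:ℝ) < p.toReal := by linarith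
    have h1 : |w i| = (|w i| ^ p.toReal) ^ (1 / p.toReal) := by
      rw [← Real.rpow_mul (abs_nonneg _), mul_one_div_cancel (ne_of_gt ht0), Real.rpow_one]
    rw [h1]
    apply Real.rpow_le_rpow (Real.rpow_nonneg (abs_nonneg _) _)
    · exact Finset.single_le_sum (f := fun i => |w i| ^ p.toReal)
        (fun i _ => Real.rpow_nonneg (abs_nonneg _) _) (Finset.mem_univ i)
    · positivity

lemma lip {d : ℕ} (hd : 0 < d) (p : ℝ≥0∞) (hp : 1 ≤ p) (u v : Fin d → ℝ) :
    lpNorm p (runMax u - runMax v) ≤ (d : ℝ) ^ p⁻¹.toReal * lpNorm p (u - v) := by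
  haveI : Nonempty (Fin d) := ⟨⟨0, hd⟩⟩
  set C := Finset.univ.sup' Finset.univ_nonempty (fun i => |u i - v i|) with hC
  have hCle : ∀ i, |u i - v i| ≤ C := by
    intro i; rw [hC]; exact Finset.le_sup' (fun i => |u i - v i|) (Finset.mem_univ i)
  have hC0 : 0 ≤ C := le_trans (abs_nonneg _) (hCle ⟨0, hd⟩)
  have hone : ∀ w₁ w₂ : Fin d → ℝ, (∀ i, |w₁ i - w₂ i| ≤ C) →
      ∀ j, runMax w₁ j ≤ runMax w₂ j + C := by
    intro w₁ w₂ hC' j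
    apply Finset.sup'_le
    intro i hi
    have h1 := (abs_le.mp (hC' i)).2
    have h2 : w₂ i ≤ runMax w₂ j := Finset.le_sup' w₂ hi
    linarith
  have hCle' : ∀ i, |v i - u i| ≤ C := fun i => by rw [abs_sub_comm]; exact hCle i
  have hpt : ∀ j, |runMax u j - runMax v j| ≤ C := by
    intro j
    rw [abs_le]
    constructor
    · linarith [hone v u hCle' j]
    · linarith [hone u v hCle j]
  have hCln : C ≤ lpNorm p (u - v) := by
    rw [hC]
    apply Finset.sup'_le
    intro i _
    have := abs_le_lpNorm p hp (u - v) i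
    simpa using this
  by_cases hptop : p = ∞
  · subst hptop
    have h0 : (⊤ : ℝ≥0∞)⁻¹.toReal = 0 := by simp
    rw [h0, Real.rpow_zero, one_mul]
    unfold lpNorm
    rw [if_pos rfl, if_pos rfl]
    apply Real.iSup_le
    · intro j
      refine le_trans ?_ (le_trans hCln ?_)
      · simpa using hpt j
      · unfold lpNorm; rw [if_pos rfl]
    · refine le_trans hC0 (le_trans hCln ?_)
      unfold lpNorm; rw [if_pos rfl]
  · have ht : 1 ≤ p.toReal := toReal_ge_one hp hptop
    have ht0 : (0:ℝ) < p.toReal := by linarith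
    have hinv : p⁻¹.toReal = 1 / p.toReal := by
      rw [ENNReal.toReal_inv, one_div]
    rw [hinv]
    have hlhs : lpNorm p (runMax u - runMax v) =
        (∑ j, |(runMax u - runMax v) j| ^ p.toReal) ^ (1 / p.toReal) := by
      unfold lpNorm; rw [if_neg hptop]
    rw [hlhs]
    have hsum : ∑ j, |(runMax u - runMax v) j| ^ p.toReal ≤ (d : ℝ) * C ^ p.toReal := by
      calc ∑ j, |(runMax u - runMax v) j| ^ p.toReal
          ≤ ∑ _j : Fin d, C ^ p.toReal := by
            apply Finset.sum_le_sum
            intro j _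
            apply Real.rpow_le_rpow (abs_nonneg _) _ (le_of_lt ht0)
            simpa using hpt j
        _ = (d : ℝ) * C ^ p.toReal := by
            rw [Finset.sum_const, Finset.card_univ, Fintype.card_fin, nsmul_eq_mul]
    calc (∑ j, |(runMax u - runMax v) j| ^ p.toReal) ^ (1 / p.toReal)
        ≤ ((d : ℝ) * C ^ p.toReal) ^ (1 / p.toReal) := by
          apply Real.rpow_le_rpow _ hsum (by positivity)
          apply Finset.sum_nonneg
          intro j _
          exact Real.rpow_nonneg (abs_nonneg _) _
      _ = (d : ℝ) ^ (1 / p.toReal) * C := by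
          rw [Real.mul_rpow (by positivity) (Real.rpow_nonneg hC0 _),
            ← Real.rpow_mul hC0, mul_one_div_cancel (ne_of_gt ht0), Real.rpow_one]
      _ ≤ (d : ℝ) ^ (1 / p.toReal) * lpNorm p (u - v) := by
          apply mul_le_mul_of_nonneg_left hCln (by positivity)

end ExtMaxAux

/-- **Lemma 3.13**: the extended maximum function
`𝔪_d(x) = (max{x_1}, max{x_1,x_2}, …, max{x_1,…,x_d})` on any hypercube `Q = [a,b]^d`
can be approximated with Lipschitz constant `d^{1/p}` at cost `≤ K d⁴`, for every
`ε ∈ [0,∞)` (convention `1/∞ = 0`). -/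
theorem extended_max_approx :
    ∃ K : ℕ, 0 < K ∧
      ∀ d : ℕ, 0 < d → ∀ (a b : ℝ), a < b → ∀ ε : ℝ, 0 ≤ ε → ∀ p : ℝ≥0∞, 1 ≤ p →
        Cost p (cube d a b)
            (fun x (i : Fin d) => (Finset.Iic i).sup' Finset.nonempty_Iic x)
            ((d : ℝ) ^ p⁻¹.toReal) ε ≤
          ENNReal.ofReal ((K : ℝ) * (d : ℝ) ^ 4) := by
  refine ⟨4, by norm_num, ?_⟩
  intro d hd a b hab ε hε p hp
  have hparams : (ExtMaxAux.maxNet d a).params = (d + 1) * (d * (d + 1)) := by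
    simp [DNN.params, ExtMaxAux.maxNet, Finset.sum_const, Finset.card_range, smul_eq_mul]
  have hcost : Cost p (cube d a b)
      (fun x (i : Fin d) => (Finset.Iic i).sup' Finset.nonempty_Iic x)
      ((d : ℝ) ^ p⁻¹.toReal) ε ≤ (((ExtMaxAux.maxNet d a).params : ℕ) : ℝ≥0∞) := by
    apply sInf_le
    have hg : ∀ (x : Fin d → ℝ), (∀ i, a ≤ x i) → ∀ i : Fin d,
        (ExtMaxAux.maxNet d a).realize x i = ExtMaxAux.runMax x i :=
      fun x hxa i => ExtMaxAux.realize_eq hd x hxa i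
    refine ⟨ExtMaxAux.maxNet d a,
      (fun x i => (ExtMaxAux.maxNet d a).realize x i : (Fin d → ℝ) → (Fin d → ℝ)),
      ⟨rfl, rfl, fun x i => rfl⟩, rfl, ?_, ?_⟩
    · intro x hx
      have hxa : ∀ i, a ≤ x i := fun i => hx.1 i
      have hz : ((fun (x : Fin d → ℝ) (i : Fin d) => (ExtMaxAux.maxNet d a).realize x i) x -
          (fun x' (i : Fin d) => (Finset.Iic i).sup' Finset.nonempty_Iic x') x)
          = (0 : Fin d → ℝ) := by
        funext i
        simp only [Pi.sub_apply]
        rw [hg x hxa i]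
        simp [ExtMaxAux.runMax]
      rw [hz, ExtMaxAux.lpNorm_zero_eq p hp]
      exact hε
    · intro x hx y hy
      have hgx : ((fun (x : Fin d → ℝ) (i : Fin d) => (ExtMaxAux.maxNet d a).realize x i) x -
          (fun (x : Fin d → ℝ) (i : Fin d) => (ExtMaxAux.maxNet d a).realize x i) y)
          = ExtMaxAux.runMax x - ExtMaxAux.runMax y := by
        funext i
        simp only [Pi.sub_apply]
        rw [hg x (fun i => hx.1 i) i, hg y (fun i => hy.1 i) i]
      rw [hgx]
      exact ExtMaxAux.lip hd p hp x y
  refine le_trans hcost ?_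
  have h4 : ((4 : ℕ) : ℝ) * (d : ℝ) ^ 4 = ((4 * d ^ 4 : ℕ) : ℝ) := by push_cast; ring
  rw [h4, ENNReal.ofReal_natCast, hparams, Nat.cast_le]
  have h1 : d + 1 ≤ 2 * d := by omega
  calc (d + 1) * (d * (d + 1)) ≤ (2 * d) * (d * (2 * d)) :=
        Nat.mul_le_mul h1 (Nat.mul_le_mul_left _ h1)
    _ = 4 * d ^ 3 := by ring
    _ ≤ 4 * d ^ 4 := by
        have h3 : d ^ 3 ≤ d ^ 4 := Nat.pow_le_pow_right hd (by omega)
        omega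

end
end
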